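/- Let H be a complex Hilbert space and let T¹ = {T¹_t}_{t≥0} and T² = {T²_t}_{t≥0} be two semigroups of contraction operators on H, each continuous in the strong operator topology, such that T¹_s T²_t = T²_t T¹_s for all s,t ≥ 0. For i = 1,2 define φ^i_t(a) = T^i_t a (T^i_t)* for a ∈ B(H). Then for every s,t ≥ 0, the CP maps φ¹_s and φ²_t on B(H) commute strongly. -/

import Mathlib

open scoped InnerProductSpace ComplexOrder
universe u

lemma exists_sandwich {H : Type u} [NormedAddCommGroup H] [InnerProductSpace ℂ H]
    (A B : H →L[ℂ] H) (hA : A ≠ 0) (hB : B ≠ 0) (w : H) :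
    ∃ (a b : H →L[ℂ] H) (h : H), (a * A * b * B) h = w := by
  obtain ⟨h₀, hh₀⟩ : ∃ h, B h ≠ 0 := by
    by_contra hcon
    push_neg at hcon
    exact hB (ContinuousLinearMap.ext fun x => by simpa using hcon x)
  obtain ⟨v, hv⟩ : ∃ v, A v ≠ 0 := by
    by_contra hcon
    push_neg at hcon
    exact hA (ContinuousLinearMap.ext fun x => by simpa using hcon x)
  set b : H →L[ℂ] H := (innerSL ℂ (B h₀)).smulRight v with hbdef
  have hb : b (B h₀) = ((‖B h₀‖ : ℂ) ^ 2) • v := by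
    simp [hbdef, inner_self_eq_norm_sq_to_K]
  set z : H := A (b (B h₀)) with hzdef
  have hz : z = ((‖B h₀‖ : ℂ) ^ 2) • A v := by rw [hzdef, hb, map_smul]
  have hz0 : z ≠ 0 := by
    rw [hz]
    refine smul_ne_zero (pow_ne_zero _ ?_) hv
    exact Complex.ofReal_ne_zero.mpr (norm_ne_zero_iff.mpr hh₀)
  set a : H →L[ℂ] H := ((‖z‖ : ℂ) ^ 2)⁻¹ • (innerSL ℂ z).smulRight w with hadef
  refine ⟨a, b, h₀, ?_⟩
  have ha : a z = w := by
    rw [hadef]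
    simp only [ContinuousLinearMap.smul_apply, ContinuousLinearMap.smulRight_apply,
      innerSL_apply_apply, inner_self_eq_norm_sq_to_K]
    have hne : ‖z‖ ≠ 0 := norm_ne_zero_iff.mpr hz0
    rw [smul_smul]
    field_simp
    convert one_smul ℂ w
    exact div_self (by simpa using hne)
  simpa [ContinuousLinearMap.mul_apply, hzdef] using ha

/-- `⟪X h, y⟫ = ⟪h, (star X) y⟫` for a bounded operator on a Hilbert space. -/
lemma inner_star_left {H : Type u} [NormedAddCommGroup H] [InnerProductSpace ℂ H]
    [CompleteSpace H] (X : H →L[ℂ] H) (h y : H) :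
    ⟪X h, y⟫_ℂ = ⟪h, (star X) y⟫_ℂ := by
  rw [ContinuousLinearMap.star_eq_adjoint]
  exact (ContinuousLinearMap.adjoint_inner_right X h y).symm


/- STATEMENT 5: two commuting, strongly continuous semigroups of contractions on a
Hilbert space `H` give rise, by conjugation, to CP-semigroups `φ¹, φ²` on `B(H)`, and for
all `s,t ≥ 0` the CP maps `φ¹_s` and `φ²_t` commute strongly. -/

open scoped InnerProductSpace ComplexOrder



/-- `StronglyCommuteOn M Θ Φ` says that the maps `Θ` and `Φ` (defined at least on the
von Neumann algebra `M ⊆ B(H)`) commute strongly: there is a unitary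
`u : M ⊗_Φ M ⊗_Θ H → M ⊗_Θ M ⊗_Φ H` satisfying conditions (i)–(iii).
The Hilbert space `M ⊗_Φ M ⊗_Θ H` (the Hausdorff completion of the algebraic tensor product
with respect to the semi-inner product
`⟨a ⊗ b ⊗ h, c ⊗ d ⊗ k⟩ = ⟨h, Θ(b* Φ(a* c) d) k⟩`) is axiomatized as a Hilbert space `W₁`
together with a map `ι₁ : M × M × H → W₁` whose range spans a dense subspace and which
realizes the prescribed inner products; similarly for `W₂ = M ⊗_Θ M ⊗_Φ H`.  The operators
`c ⊗ I ⊗ I` (for `c ∈ M`) and `I ⊗ I ⊗ d` (for `d ∈ M′ = Set.centralizer M`) on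
`M ⊗_Θ M ⊗_Φ H` are the unique bounded operators `L c` and `Rop d` acting in the natural
way on simple tensors. -/
def StronglyCommuteOn {H : Type u} [NormedAddCommGroup H] [InnerProductSpace ℂ H]
    [CompleteSpace H]
    (M : Set (H →L[ℂ] H)) (Θ Φ : (H →L[ℂ] H) → (H →L[ℂ] H)) : Prop :=
  ∃ (W₁ : Type u) (_ : NormedAddCommGroup W₁) (_ : InnerProductSpace ℂ W₁) (_ : CompleteSpace W₁)
    (W₂ : Type u) (_ : NormedAddCommGroup W₂) (_ : InnerProductSpace ℂ W₂) (_ : CompleteSpace W₂)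
    (ι₁ : (H →L[ℂ] H) → (H →L[ℂ] H) → H → W₁)
    (ι₂ : (H →L[ℂ] H) → (H →L[ℂ] H) → H → W₂)
    (u : W₁ ≃ₗᵢ[ℂ] W₂)
    (L : (H →L[ℂ] H) → (W₂ →L[ℂ] W₂))
    (Rop : (H →L[ℂ] H) → (W₂ →L[ℂ] W₂)),
    (∀ a ∈ M, ∀ b ∈ M, ∀ c ∈ M, ∀ d ∈ M, ∀ (h k : H),
        ⟪ι₁ a b h, ι₁ c d k⟫_ℂ = ⟪h, (Θ (star b * Φ (star a * c) * d)) k⟫_ℂ) ∧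
    (∀ a ∈ M, ∀ b ∈ M, ∀ c ∈ M, ∀ d ∈ M, ∀ (h k : H),
        ⟪ι₂ a b h, ι₂ c d k⟫_ℂ = ⟪h, (Φ (star b * Θ (star a * c) * d)) k⟫_ℂ) ∧
    Dense (Submodule.span ℂ {w : W₁ | ∃ a ∈ M, ∃ b ∈ M, ∃ h : H, w = ι₁ a b h} : Set W₁) ∧
    Dense (Submodule.span ℂ {w : W₂ | ∃ a ∈ M, ∃ b ∈ M, ∃ h : H, w = ι₂ a b h} : Set W₂) ∧
    (∀ a ∈ M, ∀ h : H, u (ι₁ a 1 h) = ι₂ a 1 h) ∧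
    (∀ c ∈ M, ∀ a ∈ M, ∀ b ∈ M, ∀ h : H, L c (ι₂ a b h) = ι₂ (c * a) b h) ∧
    (∀ c ∈ M, ∀ a ∈ M, ∀ b ∈ M, ∀ h : H, u (ι₁ (c * a) b h) = L c (u (ι₁ a b h))) ∧
    (∀ d ∈ Set.centralizer M, ∀ a ∈ M, ∀ b ∈ M, ∀ h : H, Rop d (ι₂ a b h) = ι₂ a b (d h)) ∧
    (∀ d ∈ Set.centralizer M, ∀ a ∈ M, ∀ b ∈ M, ∀ h : H, u (ι₁ a b (d h)) = Rop d (u (ι₁ a b h)))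

theorem conjugation_semigroups_strongly_commute
    {H : Type u} [NormedAddCommGroup H] [InnerProductSpace ℂ H] [CompleteSpace H]
    (T₁ T₂ : ℝ → H →L[ℂ] H)
    (hc₁ : ∀ t, 0 ≤ t → ‖T₁ t‖ ≤ 1) (hc₂ : ∀ t, 0 ≤ t → ‖T₂ t‖ ≤ 1)
    (hsem₁ : ∀ s, 0 ≤ s → ∀ t, 0 ≤ t → T₁ (s + t) = T₁ s * T₁ t)
    (hsem₂ : ∀ s, 0 ≤ s → ∀ t, 0 ≤ t → T₂ (s + t) = T₂ s * T₂ t)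
    (h0₁ : T₁ 0 = 1) (h0₂ : T₂ 0 = 1)
    (hcont₁ : ∀ h : H, ContinuousOn (fun t => T₁ t h) (Set.Ici (0 : ℝ)))
    (hcont₂ : ∀ h : H, ContinuousOn (fun t => T₂ t h) (Set.Ici (0 : ℝ)))
    (hcomm : ∀ s, 0 ≤ s → ∀ t, 0 ≤ t → T₁ s * T₂ t = T₂ t * T₁ s) :
    ∀ s, 0 ≤ s → ∀ t, 0 ≤ t →
      StronglyCommuteOn (Set.univ : Set (H →L[ℂ] H))
        (fun a => T₁ s * a * star (T₁ s)) (fun a => T₂ t * a * star (T₂ t)) := by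
  intro s hs t ht
  classical
  set S : H →L[ℂ] H := T₁ s with hSdef
  set T : H →L[ℂ] H := T₂ t with hTdef
  have hST : S * T = T * S := hcomm s hs t ht
  have hST' : star T * star S = star S * star T := by
    rw [← star_mul, ← star_mul, hST]
  set f₁ : (H →L[ℂ] H) → (H →L[ℂ] H) → H → H :=
    fun a b h => (a * star T * b * star S) h with hf₁
  set f₂ : (H →L[ℂ] H) → (H →L[ℂ] H) → H → H :=
    fun a b h => (a * star S * b * star T) h with hf₂
  set S₁ : Set H := {x | ∃ a b h, x = f₁ a b h} with hS₁
  set S₂ : Set H := {x | ∃ a b h, x = f₂ a b h} with hS₂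
  have hspan : Submodule.span ℂ S₁ = Submodule.span ℂ S₂ := by
    by_cases hS0 : S = 0
    · have e1 : Submodule.span ℂ S₁ = ⊥ := by
        rw [Submodule.span_eq_bot]
        rintro x ⟨a, b, h, rfl⟩
        simp [hf₁, hS0]
      have e2 : Submodule.span ℂ S₂ = ⊥ := by
        rw [Submodule.span_eq_bot]
        rintro x ⟨a, b, h, rfl⟩
        simp [hf₂, hS0]
      rw [e1, e2]
    by_cases hT0 : T = 0
    · have e1 : Submodule.span ℂ S₁ = ⊥ := by
        rw [Submodule.span_eq_bot]
        rintro x ⟨a, b, h, rfl⟩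
        simp [hf₁, hT0]
      have e2 : Submodule.span ℂ S₂ = ⊥ := by
        rw [Submodule.span_eq_bot]
        rintro x ⟨a, b, h, rfl⟩
        simp [hf₂, hT0]
      rw [e1, e2]
    · have hS0' : star S ≠ 0 := fun h => hS0 (by simpa using congrArg star h)
      have hT0' : star T ≠ 0 := fun h => hT0 (by simpa using congrArg star h)
      have e1 : Submodule.span ℂ S₁ = ⊤ := by
        rw [eq_top_iff]
        intro x _
        obtain ⟨a, b, h, hab⟩ := exists_sandwich (star T) (star S) hT0' hS0' x
        exact Submodule.subset_span ⟨a, b, h, hab.symm⟩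
      have e2 : Submodule.span ℂ S₂ = ⊤ := by
        rw [eq_top_iff]
        intro x _
        obtain ⟨a, b, h, hab⟩ := exists_sandwich (star S) (star T) hS0' hT0' x
        exact Submodule.subset_span ⟨a, b, h, hab.symm⟩
      rw [e1, e2]
  set p : Submodule ℂ H := (Submodule.span ℂ S₁).topologicalClosure with hp
  have hpclosed : IsClosed (p : Set H) := Submodule.isClosed_topologicalClosure _
  haveI : CompleteSpace p := hpclosed.completeSpace_coe
  have hmem₁ : ∀ a b h, f₁ a b h ∈ p := fun a b h =>
    Submodule.le_topologicalClosure _ (Submodule.subset_span ⟨a, b, h, rfl⟩)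
  have hmem₂ : ∀ a b h, f₂ a b h ∈ p := by
    intro a b h
    have h2 : f₂ a b h ∈ Submodule.span ℂ S₂ := Submodule.subset_span ⟨a, b, h, rfl⟩
    rw [← hspan] at h2
    exact Submodule.le_topologicalClosure _ h2
  -- every bounded operator maps `S₁` into its span, hence preserves `p`
  have hLmem : ∀ c : H →L[ℂ] H, ∀ x ∈ p, c x ∈ p := by
    intro c x hx
    have hle : p ≤ Submodule.comap (c : H →ₗ[ℂ] H) p := by
      apply Submodule.topologicalClosure_minimal
      · rw [Submodule.span_le]
        rintro y ⟨a, b, h, rfl⟩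
        have : c (f₁ a b h) = f₁ (c * a) b h := by
          simp only [hf₁, ContinuousLinearMap.mul_apply]
        refine Submodule.mem_comap.mpr ?_
        rw [ContinuousLinearMap.coe_coe, this]
        exact hmem₁ (c * a) b h
      · have : (Submodule.comap (c : H →ₗ[ℂ] H) p : Set H) = ⇑c ⁻¹' (p : Set H) := rfl
        rw [this]
        exact hpclosed.preimage c.continuous
    exact hle hx
  set L : (H →L[ℂ] H) → (p →L[ℂ] p) :=
    fun c => ContinuousLinearMap.codRestrict (c.comp p.subtypeL) p
      (fun x => hLmem c x.1 x.2) with hL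
  set ι₁ : (H →L[ℂ] H) → (H →L[ℂ] H) → H → p :=
    fun a b h => ⟨f₁ a b h, hmem₁ a b h⟩ with hι₁
  set ι₂ : (H →L[ℂ] H) → (H →L[ℂ] H) → H → p :=
    fun a b h => ⟨f₂ a b h, hmem₂ a b h⟩ with hι₂
  refine ⟨p, inferInstance, inferInstance, inferInstance,
    p, inferInstance, inferInstance, inferInstance,
    ι₁, ι₂, LinearIsometryEquiv.refl ℂ p, L, L,
    ?_, ?_, ?_, ?_, ?_, ?_, ?_, ?_, ?_⟩
  · intro a _ b _ c _ d _ h k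
    have hop : star (a * star T * b * star S) * (c * star T * d * star S)
        = S * (star b * (T * (star a * c) * star T) * d) * star S := by
      simp only [star_mul, star_star, mul_assoc]
    calc ⟪ι₁ a b h, ι₁ c d k⟫_ℂ
        = ⟪(a * star T * b * star S) h, (c * star T * d * star S) k⟫_ℂ := rfl
      _ = ⟪h, (star (a * star T * b * star S) * (c * star T * d * star S)) k⟫_ℂ := by
          rw [inner_star_left]
          simp only [ContinuousLinearMap.mul_apply]
      _ = ⟪h, (S * (star b * (T * (star a * c) * star T) * d) * star S) k⟫_ℂ := by
          rw [hop]
  · intro a _ b _ c _ d _ h k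
    have hop : star (a * star S * b * star T) * (c * star S * d * star T)
        = T * (star b * (S * (star a * c) * star S) * d) * star T := by
      simp only [star_mul, star_star, mul_assoc]
    calc ⟪ι₂ a b h, ι₂ c d k⟫_ℂ
        = ⟪(a * star S * b * star T) h, (c * star S * d * star T) k⟫_ℂ := rfl
      _ = ⟪h, (star (a * star S * b * star T) * (c * star S * d * star T)) k⟫_ℂ := by
          rw [inner_star_left]
          simp only [ContinuousLinearMap.mul_apply]
      _ = ⟪h, (T * (star b * (S * (star a * c) * star S) * d) * star T) k⟫_ℂ := by
          rw [hop]
  · -- density for W₁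
    rw [dense_iff_closure_eq]
    apply Set.eq_univ_of_forall
    intro x
    rw [closure_subtype]
    have himg : (Subtype.val '' (Submodule.span ℂ
        {w : ↥p | ∃ a ∈ (Set.univ : Set (H →L[ℂ] H)), ∃ b ∈ (Set.univ : Set (H →L[ℂ] H)),
          ∃ h : H, w = ι₁ a b h} : Set ↥p)) = (Submodule.span ℂ S₁ : Set H) := by
      have hmap : Submodule.map p.subtype (Submodule.span ℂ
          {w : ↥p | ∃ a ∈ (Set.univ : Set (H →L[ℂ] H)), ∃ b ∈ (Set.univ : Set (H →L[ℂ] H)),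
            ∃ h : H, w = ι₁ a b h}) = Submodule.span ℂ S₁ := by
        rw [Submodule.map_span]
        congr 1
        ext y
        constructor
        · rintro ⟨w, ⟨a, -, b, -, h, rfl⟩, rfl⟩
          exact ⟨a, b, h, rfl⟩
        · rintro ⟨a, b, h, rfl⟩
          exact ⟨ι₁ a b h, ⟨a, trivial, b, trivial, h, rfl⟩, rfl⟩
      calc Subtype.val '' _ = (Submodule.map p.subtype (Submodule.span ℂ
            {w : ↥p | ∃ a ∈ (Set.univ : Set (H →L[ℂ] H)), ∃ b ∈ (Set.univ : Set (H →L[ℂ] H)),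
              ∃ h : H, w = ι₁ a b h}) : Set H) := rfl
        _ = _ := by rw [hmap]
    rw [himg, ← Submodule.topologicalClosure_coe]
    exact x.2
  · -- density for W₂
    rw [dense_iff_closure_eq]
    apply Set.eq_univ_of_forall
    intro x
    rw [closure_subtype]
    have himg : (Subtype.val '' (Submodule.span ℂ
        {w : ↥p | ∃ a ∈ (Set.univ : Set (H →L[ℂ] H)), ∃ b ∈ (Set.univ : Set (H →L[ℂ] H)),
          ∃ h : H, w = ι₂ a b h} : Set ↥p)) = (Submodule.span ℂ S₂ : Set H) := by
      have hmap : Submodule.map p.subtype (Submodule.span ℂ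
          {w : ↥p | ∃ a ∈ (Set.univ : Set (H →L[ℂ] H)), ∃ b ∈ (Set.univ : Set (H →L[ℂ] H)),
            ∃ h : H, w = ι₂ a b h}) = Submodule.span ℂ S₂ := by
        rw [Submodule.map_span]
        congr 1
        ext y
        constructor
        · rintro ⟨w, ⟨a, -, b, -, h, rfl⟩, rfl⟩
          exact ⟨a, b, h, rfl⟩
        · rintro ⟨a, b, h, rfl⟩
          exact ⟨ι₂ a b h, ⟨a, trivial, b, trivial, h, rfl⟩, rfl⟩
      calc Subtype.val '' _ = (Submodule.map p.subtype (Submodule.span ℂ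
            {w : ↥p | ∃ a ∈ (Set.univ : Set (H →L[ℂ] H)), ∃ b ∈ (Set.univ : Set (H →L[ℂ] H)),
              ∃ h : H, w = ι₂ a b h}) : Set H) := rfl
        _ = _ := by rw [hmap]
    rw [himg, ← hspan, ← Submodule.topologicalClosure_coe]
    exact x.2
  · -- u (ι₁ a 1 h) = ι₂ a 1 h
    intro a _ h
    apply Subtype.ext
    show f₁ a 1 h = f₂ a 1 h
    simp only [hf₁, hf₂, mul_assoc, one_mul, mul_one, hST']
  · -- L c (ι₂ a b h) = ι₂ (c * a) b h
    intro c _ a _ b _ h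
    apply Subtype.ext
    show c (f₂ a b h) = f₂ (c * a) b h
    simp only [hf₂, ContinuousLinearMap.mul_apply]
  · -- u (ι₁ (c*a) b h) = L c (u (ι₁ a b h))
    intro c _ a _ b _ h
    apply Subtype.ext
    show f₁ (c * a) b h = c (f₁ a b h)
    simp only [hf₁, ContinuousLinearMap.mul_apply]
  · -- Rop d (ι₂ a b h) = ι₂ a b (d h)
    intro d hd a _ b _ h
    apply Subtype.ext
    show d (f₂ a b h) = f₂ a b (d h)
    have hcd : (a * star S * b * star T) * d = d * (a * star S * b * star T) :=
      hd _ (Set.mem_univ _)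
    calc d (f₂ a b h) = (d * (a * star S * b * star T)) h := rfl
      _ = ((a * star S * b * star T) * d) h := by rw [hcd]
      _ = f₂ a b (d h) := rfl
  · -- u (ι₁ a b (d h)) = Rop d (u (ι₁ a b h))
    intro d hd a _ b _ h
    apply Subtype.ext
    show f₁ a b (d h) = d (f₁ a b h)
    have hcd : (a * star T * b * star S) * d = d * (a * star T * b * star S) :=
      hd _ (Set.mem_univ _)
    calc f₁ a b (d h) = ((a * star T * b * star S) * d) h := rfl
      _ = (d * (a * star T * b * star S)) h := by rw [hcd]
      _ = d (f₁ a b h) := rfl
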